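/- For any natural number ν ≥ 5 and any natural number K with 2 ≤ K ≤ √ν, one has (2Φ(-√(ν/K)))^K < 2Φ(-√ν), where Φ is the standard normal CDF. -/

import Mathlib

open Real MeasureTheory

open Set Filter Topology

noncomputable def stdNormalCDF (t : ℝ) : ℝ :=
  ∫ s in Set.Iic t, Real.exp (-s ^ 2 / 2) / Real.sqrt (2 * Real.pi)

lemma gauss_int : Integrable (fun s : ℝ => Real.exp (-s ^ 2 / 2)) := by
  have h := integrable_exp_neg_mul_sq (show (0:ℝ) < 1/2 by norm_num)
  have : (fun s : ℝ => Real.exp (-s ^ 2 / 2)) = fun x : ℝ => Real.exp (-(1/2) * x ^ 2) := by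
    funext s; rw [show -s ^ 2 / 2 = -(1/2) * s ^ 2 by ring]
  rw [this]; exact h

lemma lin_gauss_int : Integrable (fun s : ℝ => s * Real.exp (-s ^ 2 / 2)) := by
  have h := integrable_mul_exp_neg_mul_sq (show (0:ℝ) < 1/2 by norm_num)
  have : (fun s : ℝ => s * Real.exp (-s ^ 2 / 2)) = fun x : ℝ => x * Real.exp (-(1/2) * x ^ 2) := by
    funext s; rw [show -s ^ 2 / 2 = -(1/2) * s ^ 2 by ring]
  rw [this]; exact h

lemma gauss_deriv (s : ℝ) :
    HasDerivAt (fun t : ℝ => Real.exp (-t ^ 2 / 2)) (-s * Real.exp (-s ^ 2 / 2)) s := by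
  have h : HasDerivAt (fun t : ℝ => -t ^ 2 / 2) (-s) s := by
    have := ((hasDerivAt_pow 2 s).neg).div_const 2
    refine this.congr_deriv ?_
    simp; ring
  have := h.exp
  convert this using 1
  ring

lemma gauss_tendsto : Tendsto (fun s : ℝ => Real.exp (-s ^ 2 / 2)) atBot (𝓝 0) := by
  have h0 : Tendsto (fun s : ℝ => -s) atBot atTop := tendsto_neg_atBot_atTop
  have h1 : Tendsto (fun s : ℝ => s ^ 2) atBot atTop := by
    have h2 := (tendsto_pow_atTop (n := 2) (by norm_num)).comp h0
    simpa [Function.comp_def, neg_sq] using h2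
  have h2 : Tendsto (fun s : ℝ => -s ^ 2 / 2) atBot atBot := by
    have := (tendsto_neg_atTop_atBot.comp h1).atBot_div_const (show (0:ℝ) < 2 by norm_num)
    simpa [Function.comp] using this
  exact Real.tendsto_exp_atBot.comp h2

lemma gauss_ftc (c : ℝ) :
    ∫ s in Set.Iic c, -s * Real.exp (-s ^ 2 / 2) = Real.exp (-c ^ 2 / 2) := by
  have := integral_Iic_of_hasDerivAt_of_tendsto'
    (f := fun t : ℝ => Real.exp (-t ^ 2 / 2)) (f' := fun s => -s * Real.exp (-s ^ 2 / 2))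
    (a := c) (m := 0) (fun x _ => gauss_deriv x) ?_ gauss_tendsto
  · simpa using this
  · exact (lin_gauss_int.neg.congr (by filter_upwards with s; simp)).integrableOn

lemma tail_ub {x : ℝ} (hx : 0 < x) :
    ∫ s in Set.Iic (-x), Real.exp (-s ^ 2 / 2) ≤ Real.exp (-x ^ 2 / 2) / x := by
  have hint1 : IntegrableOn (fun s : ℝ => Real.exp (-s ^ 2 / 2)) (Set.Iic (-x)) :=
    gauss_int.integrableOn
  have hint2 : IntegrableOn (fun s : ℝ => (-s / x) * Real.exp (-s ^ 2 / 2)) (Set.Iic (-x)) := by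
    refine ((lin_gauss_int.const_mul (-1/x)).congr ?_).integrableOn
    filter_upwards with s; ring
  have hmono : ∫ s in Set.Iic (-x), Real.exp (-s ^ 2 / 2)
      ≤ ∫ s in Set.Iic (-x), (-s / x) * Real.exp (-s ^ 2 / 2) := by
    refine setIntegral_mono_on hint1 hint2 measurableSet_Iic ?_
    intro s hs
    have hs' : s ≤ -x := hs
    have h1 : (1:ℝ) ≤ -s / x := by
      rw [le_div_iff₀ hx]; linarith
    nlinarith [Real.exp_pos (-s ^ 2 / 2)]
  have heq : ∫ s in Set.Iic (-x), (-s / x) * Real.exp (-s ^ 2 / 2)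
      = Real.exp (-x ^ 2 / 2) / x := by
    have h1 : (fun s : ℝ => (-s / x) * Real.exp (-s ^ 2 / 2))
        = fun s : ℝ => (1/x) * (-s * Real.exp (-s ^ 2 / 2)) := by
      funext s; ring
    rw [h1, integral_const_mul, gauss_ftc, neg_sq]
    ring
  linarith [hmono, heq.le, heq.ge]

lemma h_deriv (s : ℝ) :
    HasDerivAt (fun t : ℝ => t * Real.exp (-t ^ 2 / 2) / (1 + t ^ 2))
      (Real.exp (-s ^ 2 / 2) * (2 / (1 + s ^ 2) ^ 2 - 1)) s := by
  have hden : (1 + s ^ 2) ≠ 0 := by positivity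
  have hnum : HasDerivAt (fun t : ℝ => t * Real.exp (-t ^ 2 / 2))
      (Real.exp (-s ^ 2 / 2) + s * (-s * Real.exp (-s ^ 2 / 2))) s := by
    have := (hasDerivAt_id s).mul (gauss_deriv s)
    refine this.congr_deriv ?_; simp
  have hd : HasDerivAt (fun t : ℝ => 1 + t ^ 2) (2 * s) s := by
    have := (hasDerivAt_pow 2 s).const_add 1
    refine this.congr_deriv ?_; simp
  have := hnum.div hd hden
  refine this.congr_deriv ?_
  field_simp
  ring

lemma h_int : Integrable (fun s : ℝ => Real.exp (-s ^ 2 / 2) * (2 / (1 + s ^ 2) ^ 2 - 1)) := by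
  refine gauss_int.mono' ?_ ?_
  · apply Continuous.aestronglyMeasurable
    apply Continuous.mul
    · exact Real.continuous_exp.comp (by continuity)
    · refine Continuous.sub ?_ continuous_const
      refine Continuous.div continuous_const (by continuity) ?_
      intro s; positivity
  · filter_upwards with s
    have hden : (0:ℝ) < (1 + s ^ 2) ^ 2 := by positivity
    have h1 : (0:ℝ) < 2 / (1 + s ^ 2) ^ 2 := by positivity
    have h2 : 2 / (1 + s ^ 2) ^ 2 ≤ 2 := by
      rw [div_le_iff₀ hden]; nlinarith [sq_nonneg s]
    have he : 0 < Real.exp (-s ^ 2 / 2) := Real.exp_pos _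
    rw [Real.norm_eq_abs, abs_mul, abs_of_pos he]
    have h3 : |2 / (1 + s ^ 2) ^ 2 - 1| ≤ 1 := abs_le.2 ⟨by linarith, by linarith⟩
    nlinarith

lemma h_tendsto : Tendsto (fun s : ℝ => s * Real.exp (-s ^ 2 / 2) / (1 + s ^ 2)) atBot (𝓝 0) := by
  have hb : Tendsto (fun s : ℝ => -Real.exp (-s ^ 2 / 2)) atBot (𝓝 0) := by
    simpa using gauss_tendsto.neg
  refine tendsto_of_tendsto_of_tendsto_of_le_of_le hb gauss_tendsto ?_ ?_
  · intro s
    have he : 0 < Real.exp (-s ^ 2 / 2) := Real.exp_pos _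
    have hden : (0:ℝ) < 1 + s ^ 2 := by positivity
    rw [neg_le, ← neg_div, div_le_iff₀ hden]
    nlinarith [sq_nonneg (s - 1), sq_nonneg (s + 1)]
  · intro s
    have he : 0 < Real.exp (-s ^ 2 / 2) := Real.exp_pos _
    have hden : (0:ℝ) < 1 + s ^ 2 := by positivity
    rw [div_le_iff₀ hden]
    nlinarith [sq_nonneg (s - 1), sq_nonneg (s + 1)]

lemma h_ftc (c : ℝ) :
    ∫ s in Set.Iic c, Real.exp (-s ^ 2 / 2) * (2 / (1 + s ^ 2) ^ 2 - 1)
      = c * Real.exp (-c ^ 2 / 2) / (1 + c ^ 2) := by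
  have := integral_Iic_of_hasDerivAt_of_tendsto'
    (f := fun t : ℝ => t * Real.exp (-t ^ 2 / 2) / (1 + t ^ 2))
    (f' := fun s => Real.exp (-s ^ 2 / 2) * (2 / (1 + s ^ 2) ^ 2 - 1))
    (a := c) (m := 0) (fun x _ => h_deriv x) h_int.integrableOn h_tendsto
  simpa using this

lemma tail_lb {x : ℝ} (hx : 0 < x) :
    x * Real.exp (-x ^ 2 / 2) / (1 + x ^ 2) ≤ ∫ s in Set.Iic (-x), Real.exp (-s ^ 2 / 2) := by
  have hmono : ∫ s in Set.Iic (-x), -(Real.exp (-s ^ 2 / 2) * (2 / (1 + s ^ 2) ^ 2 - 1))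
      ≤ ∫ s in Set.Iic (-x), Real.exp (-s ^ 2 / 2) := by
    refine setIntegral_mono_on h_int.neg.integrableOn gauss_int.integrableOn
      measurableSet_Iic ?_
    intro s _
    have he : 0 < Real.exp (-s ^ 2 / 2) := Real.exp_pos _
    have h1 : (0:ℝ) < 2 / (1 + s ^ 2) ^ 2 := by positivity
    nlinarith
  have heq : ∫ s in Set.Iic (-x), -(Real.exp (-s ^ 2 / 2) * (2 / (1 + s ^ 2) ^ 2 - 1))
      = x * Real.exp (-x ^ 2 / 2) / (1 + x ^ 2) := by
    rw [integral_neg, h_ftc, neg_pow, neg_pow]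
    ring_nf
  linarith [hmono, heq.le, heq.ge]

lemma stdNormalCDF_eq (t : ℝ) :
    stdNormalCDF t = (∫ s in Set.Iic t, Real.exp (-s ^ 2 / 2)) / Real.sqrt (2 * Real.pi) := by
  unfold stdNormalCDF
  rw [integral_div]

set_option maxHeartbeats 1000000 in
theorem batch_tail_lt_single_tail (ν K : ℕ) (hν : 5 ≤ ν) (hK2 : 2 ≤ K)
    (hKν : (K : ℝ) ≤ Real.sqrt ν) :
    (2 * stdNormalCDF (-Real.sqrt ((ν : ℝ) / (K : ℝ)))) ^ K <
      2 * stdNormalCDF (-Real.sqrt (ν : ℝ)) := by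
  have hν5 : (5:ℝ) ≤ (ν:ℝ) := by exact_mod_cast hν
  have hνpos : (0:ℝ) < ν := by linarith
  have hK2' : (2:ℝ) ≤ (K:ℝ) := by exact_mod_cast hK2
  have hKpos : (0:ℝ) < K := by linarith
  have hKne : (K:ℝ) ≠ 0 := ne_of_gt hKpos
  set a := Real.sqrt ((ν:ℝ) / K) with ha_def
  set b := Real.sqrt (ν:ℝ) with hb_def
  have hapos : 0 < a := Real.sqrt_pos.2 (by positivity)
  have hbpos : 0 < b := Real.sqrt_pos.2 hνpos
  have ha2 : a ^ 2 = (ν:ℝ) / K := Real.sq_sqrt (by positivity)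
  have hb2 : b ^ 2 = (ν:ℝ) := Real.sq_sqrt (le_of_lt hνpos)
  have hbb : b * b = (ν:ℝ) := Real.mul_self_sqrt (le_of_lt hνpos)
  have hs2pi : 0 < Real.sqrt (2 * Real.pi) := Real.sqrt_pos.2 (by positivity)
  have hpi_gt : 3.1415 < Real.pi := by linarith [Real.pi_gt_d6]
  have hs2pi_lt : Real.sqrt (2 * Real.pi) < 2.51 := by
    have hpi_lt : Real.pi < 3.1416 := by linarith [Real.pi_lt_d6]
    nlinarith [Real.sq_sqrt (show (0:ℝ) ≤ 2 * Real.pi by positivity), hs2pi]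
  set c := 2 / (a * Real.sqrt (2 * Real.pi)) with hc_def
  have hcpos : 0 < c := by positivity
  have h2pi : Real.sqrt (2 * Real.pi) ^ 2 = 2 * Real.pi :=
    Real.sq_sqrt (by positivity)
  have hc2 : c ^ 2 = 2 * K / (Real.pi * ν) := by
    rw [hc_def, div_pow, mul_pow, h2pi, ha2]
    field_simp
  have hc2le : c ^ 2 ≤ 2 / (Real.pi * b) := by
    rw [hc2, div_le_div_iff₀ (by positivity) (by positivity)]
    have hmul := mul_le_mul_of_nonneg_left hKν
      (le_of_lt (show (0:ℝ) < 2 * Real.pi * b by positivity))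
    nlinarith [hmul, hbb, Real.pi_pos]
  have hclt1 : c < 1 := by
    have hblt : 2 < b := by nlinarith [hbb, hbpos]
    have h2 : 2 / (Real.pi * b) < 1 := by
      rw [div_lt_one (by positivity)]
      nlinarith [hpi_gt]
    nlinarith [hcpos, hc2le, h2, sq_nonneg (c - 1)]
  have hcK : c ^ K ≤ c ^ 2 := pow_le_pow_of_le_one hcpos.le hclt1.le hK2
  -- upper bound on L
  have hLub : 2 * stdNormalCDF (-a) ≤ c * Real.exp (-a ^ 2 / 2) := by
    rw [stdNormalCDF_eq]
    have hub := tail_ub hapos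
    calc 2 * ((∫ s in Set.Iic (-a), Real.exp (-s ^ 2 / 2)) / Real.sqrt (2 * Real.pi))
        ≤ 2 * ((Real.exp (-a ^ 2 / 2) / a) / Real.sqrt (2 * Real.pi)) := by
          gcongr
      _ = c * Real.exp (-a ^ 2 / 2) := by
          rw [hc_def]; field_simp
  have hLnn : 0 ≤ 2 * stdNormalCDF (-a) := by
    rw [stdNormalCDF_eq]
    have h := tail_lb hapos
    have h0 : (0:ℝ) ≤ a * Real.exp (-a ^ 2 / 2) / (1 + a ^ 2) := by positivity
    have hG : 0 ≤ ∫ s in Set.Iic (-a), Real.exp (-s ^ 2 / 2) := le_trans h0 h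
    exact mul_nonneg (by norm_num) (div_nonneg hG hs2pi.le)
  have hEa : Real.exp (-a ^ 2 / 2) ^ K = Real.exp (-(ν:ℝ) / 2) := by
    rw [← Real.exp_nat_mul, ha2]
    congr 1
    field_simp
  have hE : 0 < Real.exp (-(ν:ℝ) / 2) := Real.exp_pos _
  have step1 : (2 * stdNormalCDF (-a)) ^ K ≤ (c * Real.exp (-a ^ 2 / 2)) ^ K :=
    pow_le_pow_left₀ hLnn hLub K
  have step2 : (c * Real.exp (-a ^ 2 / 2)) ^ K = c ^ K * Real.exp (-(ν:ℝ) / 2) := by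
    rw [mul_pow, hEa]
  have step3 : c ^ K * Real.exp (-(ν:ℝ) / 2) ≤ 2 / (Real.pi * b) * Real.exp (-(ν:ℝ) / 2) := by
    have := le_trans hcK hc2le
    gcongr
  have key : (1 + (ν:ℝ)) * Real.sqrt (2 * Real.pi) < Real.pi * (ν:ℝ) := by
    nlinarith [hs2pi_lt, hpi_gt, hν5, hs2pi]
  have step4 : 2 / (Real.pi * b) * Real.exp (-(ν:ℝ) / 2) < 2 * stdNormalCDF (-b) := by
    rw [stdNormalCDF_eq]
    have hlb := tail_lb hbpos
    rw [hb2] at hlb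
    calc 2 / (Real.pi * b) * Real.exp (-(ν:ℝ) / 2)
        < 2 * ((b * Real.exp (-(ν:ℝ) / 2) / (1 + (ν:ℝ))) / Real.sqrt (2 * Real.pi)) := by
          rw [show 2 * ((b * Real.exp (-(ν:ℝ) / 2) / (1 + (ν:ℝ))) / Real.sqrt (2 * Real.pi))
              = 2 * b * Real.exp (-(ν:ℝ) / 2) / ((1 + (ν:ℝ)) * Real.sqrt (2 * Real.pi)) by
                rw [div_div, ← mul_div_assoc, ← mul_assoc],
            show 2 / (Real.pi * b) * Real.exp (-(ν:ℝ) / 2)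
              = 2 * Real.exp (-(ν:ℝ) / 2) / (Real.pi * b) by ring,
            div_lt_div_iff₀ (by positivity) (by positivity)]
          have hgoal : 2 * Real.exp (-(ν:ℝ) / 2) * ((1 + (ν:ℝ)) * Real.sqrt (2 * Real.pi))
              < 2 * Real.exp (-(ν:ℝ) / 2) * (Real.pi * (ν:ℝ)) := by nlinarith [key, hE]
          calc 2 * Real.exp (-(ν:ℝ) / 2) * ((1 + (ν:ℝ)) * Real.sqrt (2 * Real.pi))
              < 2 * Real.exp (-(ν:ℝ) / 2) * (Real.pi * (ν:ℝ)) := hgoal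
            _ = 2 * b * Real.exp (-(ν:ℝ) / 2) * (Real.pi * b) := by rw [← hbb]; ring
      _ ≤ 2 * ((∫ s in Set.Iic (-b), Real.exp (-s ^ 2 / 2)) / Real.sqrt (2 * Real.pi)) := by
          gcongr
  calc (2 * stdNormalCDF (-a)) ^ K
      ≤ c ^ K * Real.exp (-(ν:ℝ) / 2) := step2 ▸ step1
    _ ≤ 2 / (Real.pi * b) * Real.exp (-(ν:ℝ) / 2) := step3
    _ < 2 * stdNormalCDF (-b) := step4
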